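/- Let n ≥ 0, let Q ⊆ [0,1)² be a dyadic rectangle with |Q| ≥ 2^{-n-1}, and let ε_R ∈ {-1,1} be arbitrary signs for the dyadic rectangles R of area 2^{-n}. Then for every integer 0 ≤ k ≤ n+1, the Lebesgue measure of {p ∈ Q : ∑_{|R| = 2^{-n}} ε_R h_R(p) = n+1-2k} equals |Q|·2^{-(n+1)}·C(n+1,k). -/

import Mathlib

open MeasureTheory Finset

noncomputable section

/-- The dyadic interval `[m·2^{-k}, (m+1)·2^{-k})`. -/
def dyadicI (k m : ℕ) : Set ℝ :=
  Set.Ico ((m : ℝ) * (2:ℝ)^(-(k:ℤ))) (((m : ℝ) + 1) * (2:ℝ)^(-(k:ℤ)))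

/-- The Haar function of the dyadic interval `[m·2^{-k}, (m+1)·2^{-k})`:
`-1` on the left half, `+1` on the right half, `0` outside. -/
def haarI (k m : ℕ) (x : ℝ) : ℝ :=
  if x ∈ Set.Ico ((m : ℝ) * (2:ℝ)^(-(k:ℤ))) (((m : ℝ) + 1/2) * (2:ℝ)^(-(k:ℤ))) then -1
  else if x ∈ Set.Ico (((m : ℝ) + 1/2) * (2:ℝ)^(-(k:ℤ))) (((m : ℝ) + 1) * (2:ℝ)^(-(k:ℤ))) then 1
  else 0

/-- The Haar function of the dyadic rectangle `[m·2^{-k},(m+1)·2^{-k}) × [m'·2^{-j},(m'+1)·2^{-j})`. -/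
def haarR (k m j m' : ℕ) (p : ℝ × ℝ) : ℝ := haarI k m p.1 * haarI j m' p.2

/-- The signed small ball sum `∑_{|R| = 2^{-n}} ε_R h_R`, where the rectangle of the layer `k`
with horizontal index `m` and vertical index `m'` carries the sign `ε k m m'`. -/
def signedSum (n : ℕ) (ε : ℕ → ℕ → ℕ → ℝ) (p : ℝ × ℝ) : ℝ :=
  ∑ k ∈ Finset.range (n+1), ∑ m ∈ Finset.range (2^k), ∑ m' ∈ Finset.range (2^(n-k)),
    ε k m m' * haarR k m (n-k) m' p

/-- `rad j t = 1` if the `j`-th binary digit `⌊2^j t⌋ mod 2` of `t` is `1`, `-1` otherwise. -/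
def rad (j : ℕ) (t : ℝ) : ℝ := if ⌊(2:ℝ)^j * t⌋ % 2 = 1 then 1 else -1

def bitSign (d : ℕ) : ℝ := if d % 2 = 1 then 1 else -1

def G (N : ℕ) (ε : ℕ → ℕ → ℕ → ℝ) (X Y : ℕ) : ℝ :=
  ∑ k ∈ range N, ε k (X / 2^(N-k)) (Y / 2^(k+1)) * bitSign (X / 2^(N-1-k)) * bitSign (Y / 2^k)


lemma mem_dyadicI_iff {k m : ℕ} {x : ℝ} : x ∈ dyadicI k m ↔ ⌊(2:ℝ)^k * x⌋ = (m:ℤ) := by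
  have h2 : (0:ℝ) < (2:ℝ)^k := by positivity
  have hu : (2:ℝ)^k * (2:ℝ)^(-(k:ℤ)) = 1 := by
    rw [zpow_neg, zpow_natCast]; field_simp
  have hp : (0:ℝ) < (2:ℝ)^(-(k:ℤ)) := by positivity
  rw [dyadicI, Set.mem_Ico, Int.floor_eq_iff]
  push_cast
  constructor
  · rintro ⟨h1, h3⟩
    constructor <;> nlinarith
  · rintro ⟨h1, h3⟩
    constructor <;> nlinarith

lemma floor_div_nat' (a : ℝ) (d : ℕ) (hd : 0 < d) : ⌊a / (d:ℝ)⌋ = ⌊a⌋ / (d:ℤ) := by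
  have hd' : (0:ℝ) < (d:ℝ) := by exact_mod_cast hd
  have hdz : (0:ℤ) < (d:ℤ) := by exact_mod_cast hd
  rw [Int.floor_eq_iff]
  constructor
  · rw [le_div_iff₀ hd']
    calc ((⌊a⌋ / (d:ℤ) : ℤ) : ℝ) * d = (((⌊a⌋ / (d:ℤ)) * d : ℤ) : ℝ) := by push_cast; ring
    _ ≤ (⌊a⌋ : ℝ) := by exact_mod_cast Int.ediv_mul_le ⌊a⌋ (by exact_mod_cast hd.ne' : (d:ℤ) ≠ 0)
    _ ≤ a := Int.floor_le a
  · rw [div_lt_iff₀ hd']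
    have h : (⌊a⌋ : ℤ) < (⌊a⌋ / (d:ℤ) + 1) * d := Int.lt_ediv_add_one_mul_self ⌊a⌋ hdz
    calc a < (⌊a⌋ : ℝ) + 1 := Int.lt_floor_add_one a
    _ ≤ ((⌊a⌋ / (d:ℤ) + 1) * d : ℤ) := by exact_mod_cast h
    _ = ((⌊a⌋ / (d:ℤ) : ℤ) + 1) * d := by push_cast; ring

lemma floor_scale {k K : ℕ} (h : k ≤ K) (x : ℝ) :
    ⌊(2:ℝ)^k * x⌋ = ⌊(2:ℝ)^K * x⌋ / (2^(K-k) : ℤ) := by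
  have he : (2:ℝ)^k * x = ((2:ℝ)^K * x) / ((2^(K-k) : ℕ) : ℝ) := by
    push_cast
    rw [← pow_sub_mul_pow (2:ℝ) h]
    field_simp
  rw [he, floor_div_nat' _ _ (by positivity)]
  push_cast
  rfl

lemma dyadicI_subset {k K : ℕ} (h : k ≤ K) (X : ℕ) :
    dyadicI K X ⊆ dyadicI k (X / 2^(K-k)) := by
  intro x hx
  rw [mem_dyadicI_iff] at hx ⊢
  rw [floor_scale h, hx]
  push_cast
  rfl

lemma dyadicI_unique {k m m' : ℕ} {x : ℝ} (h : x ∈ dyadicI k m) (h' : x ∈ dyadicI k m') :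
    m = m' := by
  rw [mem_dyadicI_iff] at h h'
  exact_mod_cast h.symm.trans h'

lemma dyadicI_decomp {a K q : ℕ} (h : a ≤ K) {x : ℝ} (hx : x ∈ dyadicI a q) :
    ∃ u < 2^(K-a), x ∈ dyadicI K (q * 2^(K-a) + u) := by
  have hx0 : 0 ≤ x := by
    have := hx.1
    have h0 : (0:ℝ) ≤ (q : ℝ) * (2:ℝ)^(-(a:ℤ)) := by positivity
    exact le_trans h0 this
  have hfl : ⌊(2:ℝ)^a * x⌋ = (q:ℤ) := mem_dyadicI_iff.1 hx
  set X : ℤ := ⌊(2:ℝ)^K * x⌋ with hX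
  have hX0 : 0 ≤ X := by
    have : (0:ℝ) ≤ (2:ℝ)^K * x := by positivity
    exact Int.floor_nonneg.2 this
  have hdiv : X / (2^(K-a) : ℤ) = (q:ℤ) := by
    rw [← floor_scale h, hfl]
  have hmod : X % (2^(K-a) : ℤ) = X - (q:ℤ) * 2^(K-a) := by
    rw [Int.emod_def, hdiv]; ring
  have hpos : (0:ℤ) < (2^(K-a) : ℤ) := by positivity
  refine ⟨(X - (q:ℤ) * 2^(K-a)).toNat, ?_, ?_⟩
  · have h1 : X % (2^(K-a) : ℤ) < 2^(K-a) := Int.emod_lt_of_pos X hpos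
    rw [hmod] at h1
    zify [Int.toNat_le]
    rw [Int.toNat_of_nonneg]
    · exact_mod_cast h1
    · have := Int.emod_nonneg X hpos.ne'
      rw [hmod] at this; exact this
  · rw [mem_dyadicI_iff]
    have hnn : 0 ≤ X - (q:ℤ) * 2^(K-a) := by
      have := Int.emod_nonneg X hpos.ne'
      rw [hmod] at this; exact this
    push_cast [Int.toNat_of_nonneg hnn]
    omega


lemma zpow_neg_succ (k : ℕ) : (2:ℝ)^(-((k:ℕ)+1:ℕ):ℤ) = (2:ℝ)^(-(k:ℤ)) / 2 := by
  have h : (-(((k:ℕ)+1:ℕ):ℤ)) = -(k:ℤ) - 1 := by push_cast; ring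
  rw [h, zpow_sub₀ (by norm_num : (2:ℝ) ≠ 0), zpow_one]

lemma left_half_eq (k m : ℕ) :
    dyadicI (k+1) (2*m) = Set.Ico ((m : ℝ) * (2:ℝ)^(-(k:ℤ))) (((m : ℝ) + 1/2) * (2:ℝ)^(-(k:ℤ))) := by
  rw [dyadicI]
  have hA : ((2*m : ℕ) : ℝ) * (2:ℝ)^(-((k+1:ℕ)):ℤ) = (m : ℝ) * (2:ℝ)^(-(k:ℤ)) := by
    rw [zpow_neg_succ]; push_cast; ring
  have hB : (((2*m : ℕ) : ℝ) + 1) * (2:ℝ)^(-((k+1:ℕ)):ℤ) = ((m : ℝ) + 1/2) * (2:ℝ)^(-(k:ℤ)) := by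
    rw [zpow_neg_succ]; push_cast; ring
  rw [hA, hB]

lemma right_half_eq (k m : ℕ) :
    dyadicI (k+1) (2*m+1) = Set.Ico (((m : ℝ) + 1/2) * (2:ℝ)^(-(k:ℤ))) (((m : ℝ) + 1) * (2:ℝ)^(-(k:ℤ))) := by
  rw [dyadicI]
  have hA : ((2*m+1 : ℕ) : ℝ) * (2:ℝ)^(-((k+1:ℕ)):ℤ) = ((m : ℝ) + 1/2) * (2:ℝ)^(-(k:ℤ)) := by
    rw [zpow_neg_succ]; push_cast; ring
  have hB : (((2*m+1 : ℕ) : ℝ) + 1) * (2:ℝ)^(-((k+1:ℕ)):ℤ) = ((m : ℝ) + 1) * (2:ℝ)^(-(k:ℤ)) := by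
    rw [zpow_neg_succ]; push_cast; ring
  rw [hA, hB]

lemma haarI_left {k m : ℕ} {x : ℝ} (h : x ∈ dyadicI (k+1) (2*m)) : haarI k m x = -1 := by
  rw [left_half_eq] at h
  rw [haarI, if_pos h]

lemma haarI_right {k m : ℕ} {x : ℝ} (h : x ∈ dyadicI (k+1) (2*m+1)) : haarI k m x = 1 := by
  have h1 : x ∉ Set.Ico ((m : ℝ) * (2:ℝ)^(-(k:ℤ))) (((m : ℝ) + 1/2) * (2:ℝ)^(-(k:ℤ))) := by
    rw [← left_half_eq]
    intro h2
    have := dyadicI_unique h h2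
    omega
  rw [right_half_eq] at h
  rw [haarI, if_neg h1, if_pos h]

lemma haarI_eq_zero {k m : ℕ} {x : ℝ} (hm : x ∉ dyadicI k m) : haarI k m x = 0 := by
  have h1 : x ∉ dyadicI (k+1) (2*m) := fun h => hm (by
    have := dyadicI_subset (Nat.le_succ k) (2*m) h
    have e : (2*m) / 2^(k+1-k) = m := by
      simp
    rwa [e] at this)
  have h2 : x ∉ dyadicI (k+1) (2*m+1) := fun h => hm (by
    have := dyadicI_subset (Nat.le_succ k) (2*m+1) h
    have e : (2*m+1) / 2^(k+1-k) = m := by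
      have : k+1-k = 1 := by omega
      rw [this]; omega
    rwa [e] at this)
  rw [left_half_eq] at h1
  rw [right_half_eq] at h2
  rw [haarI, if_neg h1, if_neg h2]


lemma haarI_on {k K X : ℕ} {x : ℝ} (hk : k < K) (hx : x ∈ dyadicI K X) :
    haarI k (X / 2^(K-k)) x = bitSign (X / 2^(K-1-k)) := by
  set M := X / 2^(K-k) with hM
  set D := X / 2^(K-1-k) with hD
  have hDM : D / 2 = M := by
    rw [hD, hM, Nat.div_div_eq_div_mul]
    congr 1
    have : K - k = (K-1-k) + 1 := by omega
    rw [this]; ring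
  have hxD : x ∈ dyadicI (k+1) D := by
    have := dyadicI_subset (by omega : k+1 ≤ K) X hx
    have e : K - (k+1) = K-1-k := by omega
    rwa [e] at this
  rcases Nat.mod_two_eq_zero_or_one D with h | h
  · have hD2 : D = 2 * M := by omega
    rw [bitSign, if_neg (by omega)]
    exact haarI_left (by rwa [← hD2])
  · have hD2 : D = 2 * M + 1 := by omega
    rw [bitSign, if_pos h]
    exact haarI_right (by rwa [← hD2])



lemma layer_sum (n k : ℕ) (hk : k < n+1) (ε : ℕ → ℕ → ℕ → ℝ) (X Y : ℕ)
    (hX : X < 2^(n+1)) (hY : Y < 2^(n+1)) (x y : ℝ)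
    (hx : x ∈ dyadicI (n+1) X) (hy : y ∈ dyadicI (n+1) Y) :
    ∑ m ∈ range (2^k), ∑ m' ∈ range (2^(n-k)), ε k m m' * haarR k m (n-k) m' (x,y)
      = ε k (X / 2^(n+1-k)) (Y / 2^(k+1)) * bitSign (X / 2^(n-k)) * bitSign (Y / 2^k) := by
  have hkn : k ≤ n := by omega
  set Mx := X / 2^(n+1-k) with hMx
  set My := Y / 2^(k+1) with hMy
  have hxk : x ∈ dyadicI k Mx := by
    have := dyadicI_subset (by omega : k ≤ n+1) X hx
    exact this
  have hyk : y ∈ dyadicI (n-k) My := by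
    have := dyadicI_subset (by omega : n-k ≤ n+1) Y hy
    have e : n+1-(n-k) = k+1 := by omega
    rwa [e] at this
  have hMxr : Mx ∈ range (2^k) := by
    rw [mem_range, hMx]
    apply Nat.div_lt_of_lt_mul
    calc X < 2^(n+1) := hX
    _ = 2^(n+1-k) * 2^k := by rw [← pow_add]; congr 1; omega
  have hMyr : My ∈ range (2^(n-k)) := by
    rw [mem_range, hMy]
    apply Nat.div_lt_of_lt_mul
    calc Y < 2^(n+1) := hY
    _ = 2^(k+1) * 2^(n-k) := by rw [← pow_add]; congr 1; omega
  rw [Finset.sum_eq_single_of_mem Mx hMxr]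
  · rw [Finset.sum_eq_single_of_mem My hMyr]
    · rw [haarR]
      have h1 : haarI k Mx x = bitSign (X / 2^(n-k)) := by
        have := haarI_on (by omega : k < n+1) hx
        have e : n+1-1-k = n-k := by omega
        rwa [e] at this
      have h2 : haarI (n-k) My y = bitSign (Y / 2^k) := by
        have := haarI_on (by omega : n-k < n+1) hy
        have e2 : n+1-(n-k) = k+1 := by omega
        rw [e2] at this
        have e : n+1-1-(n-k) = k := by omega
        rwa [e] at this
      rw [h1, h2]
      ring
    · intro m' _ hm'
      have : haarI (n-k) m' y = 0 := by
        apply haarI_eq_zero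
        intro hmem
        exact hm' (dyadicI_unique hmem hyk)
      rw [haarR, this]
      ring
  · intro m _ hm
    have : haarI k m x = 0 := by
      apply haarI_eq_zero
      intro hmem
      exact hm (dyadicI_unique hmem hxk)
    apply Finset.sum_eq_zero
    intro m' _
    rw [haarR, this]
    ring


lemma signedSum_eq (n : ℕ) (ε : ℕ → ℕ → ℕ → ℝ) (X Y : ℕ)
    (hX : X < 2^(n+1)) (hY : Y < 2^(n+1)) (x y : ℝ)
    (hx : x ∈ dyadicI (n+1) X) (hy : y ∈ dyadicI (n+1) Y) :
    signedSum n ε (x, y) = G (n+1) ε X Y := by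
  rw [signedSum, G]
  apply Finset.sum_congr rfl
  intro k hkr
  rw [Finset.mem_range] at hkr
  rw [layer_sum n k hkr ε X Y hX hY x y hx hy]
  have e : n + 1 - 1 - k = n - k := by omega
  rw [e]



lemma sum_range_double {M : Type*} [AddCommMonoid M] (m : ℕ) (f : ℕ → M) :
    ∑ v ∈ range (2*m), f v = ∑ v ∈ range m, (f (2*v) + f (2*v+1)) := by
  induction m with
  | zero => simp
  | succ m ih =>
    have : 2*(m+1) = (2*m) + 1 + 1 := by ring
    rw [this, Finset.sum_range_succ, Finset.sum_range_succ, ih, Finset.sum_range_succ]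
    ring_nf
    rw [add_assoc]

lemma G_succ_left (N : ℕ) (ε : ℕ → ℕ → ℕ → ℝ) (X' r Y : ℕ) (hr : r < 2) :
    G (N+1) ε (2*X'+r) Y
      = G N ε X' Y + ε N X' (Y / 2^(N+1)) * bitSign (Y / 2^N) * bitSign r := by
  rw [G, G, Finset.sum_range_succ]
  congr 1
  · apply Finset.sum_congr rfl
    intro k hk
    rw [Finset.mem_range] at hk
    have e1 : (2*X'+r) / 2^(N+1-k) = X' / 2^(N-k) := by
      have : N+1-k = (N-k) + 1 := by omega
      rw [this, pow_succ, mul_comm (2^(N-k)) 2, ← Nat.div_div_eq_div_mul]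
      congr 1
      omega
    have e2 : (2*X'+r) / 2^(N+1-1-k) = X' / 2^(N-1-k) := by
      have : N+1-1-k = (N-1-k) + 1 := by omega
      rw [this, pow_succ, mul_comm (2^(N-1-k)) 2, ← Nat.div_div_eq_div_mul]
      congr 1
      omega
    rw [e1, e2]
  · have e1 : (2*X'+r) / 2^(N+1-N) = X' := by
      have : N+1-N = 1 := by omega
      rw [this]
      simp
      omega
    have e2 : (2*X'+r) / 2^(N+1-1-N) = 2*X'+r := by
      have : N+1-1-N = 0 := by omega
      rw [this]
      simp
    have e3 : bitSign (2*X'+r) = bitSign r := by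
      rw [bitSign, bitSign]
      congr 1
      simp [Nat.add_mul_mod_self_left]
    rw [e1, e2, e3]
    ring

lemma G_succ_right (N : ℕ) (ε : ℕ → ℕ → ℕ → ℝ) (X Y' r : ℕ) (hr : r < 2) :
    G (N+1) ε X (2*Y'+r)
      = G N (fun k => ε (k+1)) X Y' + ε 0 (X / 2^(N+1)) Y' * bitSign (X / 2^N) * bitSign r := by
  rw [G, G, Finset.sum_range_succ']
  congr 1
  · apply Finset.sum_congr rfl
    intro k hk
    rw [Finset.mem_range] at hk
    have e1 : N+1-(k+1) = N-k := by omega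
    have e2 : (2*Y'+r) / 2^(k+1+1) = Y' / 2^(k+1) := by
      rw [pow_succ, mul_comm (2^(k+1)) 2, ← Nat.div_div_eq_div_mul]
      congr 1
      omega
    have e3 : N+1-1-(k+1) = N-1-k := by omega
    have e4 : (2*Y'+r) / 2^(k+1) = Y' / 2^k := by
      rw [pow_succ, mul_comm (2^k) 2, ← Nat.div_div_eq_div_mul]
      congr 1
      omega
    rw [e1, e2, e3, e4]
  · have e1 : (2*Y'+r) / 2^(0+1) = Y' := by
      simp
      omega
    have e2 : bitSign ((2*Y'+r) / 2^0) = bitSign r := by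
      rw [bitSign, bitSign]
      congr 1
      simp
    have e3 : N+1-1-0 = N := by omega
    have e4 : N+1-0 = N+1 := by omega
    rw [e1, e2, e3, e4]

noncomputable def cnt (N : ℕ) (s : ℝ) : ℕ :=
  ∑ j ∈ range (N+1), if (N:ℝ) - 2*j = s then N.choose j else 0

lemma cnt_succ (N : ℕ) (s : ℝ) : cnt (N+1) s = cnt N (s-1) + cnt N (s+1) := by
  set h : ℕ → ℕ := fun j => if (N:ℝ) - 2*j = s - 1 then N.choose j else 0 with hh
  set g : ℕ → ℕ := fun j => if (N:ℝ) - 2*j = s + 1 then N.choose j else 0 with hg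
  set f : ℕ → ℕ := fun j => if ((N+1:ℕ):ℝ) - 2*j = s then (N+1).choose j else 0 with hf
  have hS : ∑ j ∈ range (N+1), h (j+1) + h 0 = cnt N (s-1) := by
    rw [← Finset.sum_range_succ' h (N+1), Finset.sum_range_succ h (N+1)]
    have h0 : h (N+1) = 0 := by
      simp [hh, Nat.choose_succ_self]
    rw [h0, add_zero]
    rfl
  have hf0 : f 0 = h 0 := by
    simp only [hf, hh]
    congr 1
    · refine propext ⟨fun hc => by push_cast at hc ⊢; linarith, fun hc => by push_cast at hc ⊢; linarith⟩
    · simp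
  have hfsplit : ∀ j, f (j+1) = g j + h (j+1) := by
    intro j
    simp only [hf, hg, hh]
    have hc1 : (((N+1:ℕ):ℝ) - 2*(j+1:ℕ) = s) ↔ ((N:ℝ) - 2*j = s + 1) := by
      constructor <;> intro hc <;> push_cast at hc ⊢ <;> linarith
    have hc2 : (((N+1:ℕ):ℝ) - 2*(j+1:ℕ) = s) ↔ ((N:ℝ) - 2*(j+1:ℕ) = s - 1) := by
      constructor <;> intro hc <;> push_cast at hc ⊢ <;> linarith
    rw [Nat.choose_succ_succ]
    by_cases hc : ((N+1:ℕ):ℝ) - 2*(j+1:ℕ) = s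
    · rw [if_pos hc, if_pos (hc1.1 hc), if_pos (hc2.1 hc)]
    · rw [if_neg hc, if_neg (fun hz => hc (hc1.2 hz)), if_neg (fun hz => hc (hc2.2 hz))]
  have hmain : cnt (N+1) s = ∑ j ∈ range (N+1), f (j+1) + f 0 := by
    rw [cnt, ← Finset.sum_range_succ' f (N+1)]
  rw [hmain]
  have : ∑ j ∈ range (N+1), f (j+1) = ∑ j ∈ range (N+1), g j + ∑ j ∈ range (N+1), h (j+1) := by
    rw [← Finset.sum_add_distrib]
    exact Finset.sum_congr rfl (fun j _ => hfsplit j)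
  rw [this, hf0]
  have hG : ∑ j ∈ range (N+1), g j = cnt N (s+1) := rfl
  rw [hG]
  omega

lemma cnt_eval (N k : ℕ) (hk : k ≤ N) : cnt N ((N:ℝ) - 2*k) = N.choose k := by
  rw [cnt, Finset.sum_eq_single k]
  · rw [if_pos rfl]
  · intro j _ hj
    rw [if_neg]
    intro hc
    apply hj
    have : (j:ℝ) = (k:ℝ) := by linarith
    exact_mod_cast this
  · intro hk'
    exact absurd (Finset.mem_range.2 (by omega)) hk'


lemma bitSign_pm (d : ℕ) : bitSign d = 1 ∨ bitSign d = -1 := by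
  rw [bitSign]; split <;> simp

lemma bitSign_zero : bitSign 0 = -1 := by norm_num [bitSign]
lemma bitSign_one : bitSign 1 = 1 := by norm_num [bitSign]

lemma pm_split (K g s : ℝ) (hK : K = 1 ∨ K = -1) :
    ((if g + K * bitSign 0 = s then (1:ℕ) else 0) + (if g + K * bitSign 1 = s then (1:ℕ) else 0))
      = (if g = s - 1 then (1:ℕ) else 0) + (if g = s + 1 then (1:ℕ) else 0) := by
  rw [bitSign_zero, bitSign_one]
  rcases hK with h | h <;> subst h
  · simp only [show (g + 1 * (-1) = s) ↔ (g = s + 1) from by constructor <;> intro <;> linarith,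
      show (g + 1 * 1 = s) ↔ (g = s - 1) from by constructor <;> intro <;> linarith]
    exact add_comm _ _
  · simp only [show (g + (-1) * (-1) = s) ↔ (g = s - 1) from by constructor <;> intro <;> linarith,
      show (g + (-1) * 1 = s) ↔ (g = s + 1) from by constructor <;> intro <;> linarith]

lemma count_lemma (N : ℕ) : ∀ (A C P Q : ℕ) (ε : ℕ → ℕ → ℕ → ℝ),
    (∀ j m m', ε j m m' = 1 ∨ ε j m m' = -1) → ∀ s : ℝ, N ≤ A + C →
    ((Finset.range (2^A) ×ˢ Finset.range (2^C)).filter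
      (fun uv => G N ε (P * 2^A + uv.1) (Q * 2^C + uv.2) = s)).card
    = 2^(A+C-N) * cnt N s := by
  induction N with
  | zero =>
    intro A C P Q ε hε s _
    have hG : ∀ X Y : ℕ, G 0 ε X Y = 0 := by intro X Y; rw [G]; simp
    by_cases hs : (0:ℝ) = s
    · rw [Finset.filter_true_of_mem (fun uv _ => by rw [hG]; exact hs)]
      rw [Finset.card_product, Finset.card_range, Finset.card_range]
      rw [cnt]
      simp [← hs, ← pow_add]
    · rw [Finset.filter_false_of_mem (fun uv _ => by rw [hG]; exact hs)]
      rw [cnt]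
      simp [hs]
  | succ N ih =>
    intro A C P Q ε hε s hAC
    rw [Finset.card_filter, Finset.sum_product]
    rcases C with _ | C'
    · -- C = 0 : peel the lowest bit of u (layer N)
      obtain ⟨A', rfl⟩ : ∃ A', A = A' + 1 := ⟨A - 1, by omega⟩
      have hKpm : ∀ u' : ℕ, (ε N (P * 2^A' + u') (Q / 2^(N+1)) * bitSign (Q / 2^N)) = 1 ∨
          (ε N (P * 2^A' + u') (Q / 2^(N+1)) * bitSign (Q / 2^N)) = -1 := by
        intro u'
        rcases hε N (P * 2^A' + u') (Q / 2^(N+1)) with h1 | h1 <;>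
          rcases bitSign_pm (Q / 2^N) with h2 | h2 <;> rw [h1, h2] <;> norm_num
      calc ∑ u ∈ range (2^(A'+1)), ∑ v ∈ range (2^0),
            (if G (N+1) ε (P * 2^(A'+1) + u) (Q * 2^0 + v) = s then (1:ℕ) else 0)
          = ∑ u' ∈ range (2^A'),
            ((if G N ε (P * 2^A' + u') Q = s - 1 then (1:ℕ) else 0)
              + (if G N ε (P * 2^A' + u') Q = s + 1 then (1:ℕ) else 0)) := by
            rw [show (2:ℕ)^(A'+1) = 2 * 2^A' from by ring, sum_range_double]
            apply Finset.sum_congr rfl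
            intro u' _
            simp only [pow_zero, Finset.sum_range_one]
            rw [show P * (2 * 2^A') + 2*u' = 2*(P * 2^A' + u') + 0 from by ring,
              show P * (2 * 2^A') + (2*u'+1) = 2*(P * 2^A' + u') + 1 from by ring,
              show Q * 1 + 0 = Q from by ring,
              G_succ_left N ε _ 0 Q (by norm_num), G_succ_left N ε _ 1 Q (by norm_num)]
            exact pm_split _ _ s (hKpm u')
        _ = (∑ u' ∈ range (2^A'), (if G N ε (P * 2^A' + u') Q = s - 1 then (1:ℕ) else 0))
              + ∑ u' ∈ range (2^A'), (if G N ε (P * 2^A' + u') Q = s + 1 then (1:ℕ) else 0) :=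
            Finset.sum_add_distrib
        _ = 2^(A'+0-N) * cnt N (s-1) + 2^(A'+0-N) * cnt N (s+1) := by
            have h1 := ih A' 0 P Q ε hε (s-1) (by omega)
            have h2 := ih A' 0 P Q ε hε (s+1) (by omega)
            rw [Finset.card_filter, Finset.sum_product] at h1 h2
            simp only [pow_zero, mul_one, add_zero, Finset.sum_range_one] at h1 h2
            rw [show A' + 0 - N = A' - N from by omega, h1, h2]
        _ = 2^(A'+1+0-(N+1)) * cnt (N+1) s := by
            rw [cnt_succ, show A'+1+0-(N+1) = A'+0-N from by omega]
            ring
    · -- C = C' + 1 : peel the lowest bit of v (layer 0)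
      have hKpm : ∀ u v' : ℕ, (ε 0 ((P * 2^A + u) / 2^(N+1)) (Q * 2^C' + v')
                  * bitSign ((P * 2^A + u) / 2^N)) = 1 ∨
          (ε 0 ((P * 2^A + u) / 2^(N+1)) (Q * 2^C' + v')
                  * bitSign ((P * 2^A + u) / 2^N)) = -1 := by
        intro u v'
        rcases hε 0 ((P * 2^A + u) / 2^(N+1)) (Q * 2^C' + v') with h1 | h1 <;>
          rcases bitSign_pm ((P * 2^A + u) / 2^N) with h2 | h2 <;> rw [h1, h2] <;> norm_num
      calc ∑ u ∈ range (2^A), ∑ v ∈ range (2^(C'+1)),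
            (if G (N+1) ε (P * 2^A + u) (Q * 2^(C'+1) + v) = s then (1:ℕ) else 0)
          = ∑ u ∈ range (2^A), ∑ v' ∈ range (2^C'),
            ((if G N (fun k => ε (k+1)) (P * 2^A + u) (Q * 2^C' + v') = s - 1 then (1:ℕ) else 0)
              + (if G N (fun k => ε (k+1)) (P * 2^A + u) (Q * 2^C' + v') = s + 1 then (1:ℕ) else 0)) := by
            apply Finset.sum_congr rfl
            intro u _
            rw [show (2:ℕ)^(C'+1) = 2 * 2^C' from by ring, sum_range_double]
            apply Finset.sum_congr rfl
            intro v' _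
            rw [show Q * (2 * 2^C') + 2*v' = 2*(Q * 2^C' + v') + 0 from by ring,
              show Q * (2 * 2^C') + (2*v'+1) = 2*(Q * 2^C' + v') + 1 from by ring,
              G_succ_right N ε _ _ 0 (by norm_num), G_succ_right N ε _ _ 1 (by norm_num)]
            exact pm_split _ _ s (hKpm u v')
        _ = (∑ u ∈ range (2^A), ∑ v' ∈ range (2^C'),
              (if G N (fun k => ε (k+1)) (P * 2^A + u) (Q * 2^C' + v') = s - 1 then (1:ℕ) else 0))
              + ∑ u ∈ range (2^A), ∑ v' ∈ range (2^C'),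
              (if G N (fun k => ε (k+1)) (P * 2^A + u) (Q * 2^C' + v') = s + 1 then (1:ℕ) else 0) := by
            rw [← Finset.sum_add_distrib]
            exact Finset.sum_congr rfl (fun u _ => Finset.sum_add_distrib)
        _ = 2^(A+C'-N) * cnt N (s-1) + 2^(A+C'-N) * cnt N (s+1) := by
            have h1 := ih A C' P Q (fun k => ε (k+1)) (fun j m m' => hε (j+1) m m') (s-1) (by omega)
            have h2 := ih A C' P Q (fun k => ε (k+1)) (fun j m m' => hε (j+1) m m') (s+1) (by omega)
            rw [Finset.card_filter, Finset.sum_product] at h1 h2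
            rw [← h1, ← h2]
        _ = 2^(A+(C'+1)-(N+1)) * cnt (N+1) s := by
            rw [cnt_succ, show A+(C'+1)-(N+1) = A+C'-N from by omega]
            ring

lemma dyadicI_measurable (k m : ℕ) : MeasurableSet (dyadicI k m) := by
  rw [dyadicI]; exact measurableSet_Ico

lemma square_volume (K X Y : ℕ) :
    volume (dyadicI K X ×ˢ dyadicI K Y)
      = ENNReal.ofReal ((2:ℝ)^(-(K:ℤ))) * ENNReal.ofReal ((2:ℝ)^(-(K:ℤ))) := by
  rw [dyadicI, dyadicI, Measure.volume_eq_prod, Measure.prod_prod, Real.volume_Ico,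
    Real.volume_Ico]
  congr 2 <;> ring

/-- Main theorem: on any dyadic rectangle `Q` of dimensions `2^{-a} × 2^{-b}` with
`|Q| = 2^{-a-b} ≥ 2^{-n-1}`, the level set `{signedSum = n+1-2k}` has measure
`|Q| · 2^{-(n+1)} · C(n+1,k)`, regardless of the choice of signs. -/
theorem main_level_sets (n a b q1 q2 k : ℕ) (hab : a + b ≤ n + 1)
    (hq1 : q1 < 2^a) (hq2 : q2 < 2^b) (hk : k ≤ n + 1)
    (ε : ℕ → ℕ → ℕ → ℝ) (hε : ∀ j m m', ε j m m' = 1 ∨ ε j m m' = -1) :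
    volume {p : ℝ × ℝ | p ∈ (dyadicI a q1) ×ˢ (dyadicI b q2) ∧
        signedSum n ε p = (n : ℝ) + 1 - 2 * k}
      = ENNReal.ofReal ((2:ℝ)^(-(a:ℤ)-(b:ℤ)) * ((n+1).choose k : ℝ) / 2^(n+1)) := by
  classical
  set T := (Finset.range (2^(n+1-a)) ×ˢ Finset.range (2^(n+1-b))).filter
      (fun uv => G (n+1) ε (q1 * 2^(n+1-a) + uv.1) (q2 * 2^(n+1-b) + uv.2)
        = (n:ℝ) + 1 - 2 * k) with hT
  have ha : a ≤ n+1 := by omega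
  have hb : b ≤ n+1 := by omega
  have hXlt : ∀ u < 2^(n+1-a), q1 * 2^(n+1-a) + u < 2^(n+1) := by
    intro u hu
    calc q1 * 2^(n+1-a) + u < (q1+1) * 2^(n+1-a) := by nlinarith
    _ ≤ 2^a * 2^(n+1-a) := by
        have : q1 + 1 ≤ 2^a := hq1
        exact Nat.mul_le_mul_right _ this
    _ = 2^(n+1) := by rw [← pow_add]; congr 1; omega
  have hYlt : ∀ v < 2^(n+1-b), q2 * 2^(n+1-b) + v < 2^(n+1) := by
    intro v hv
    calc q2 * 2^(n+1-b) + v < (q2+1) * 2^(n+1-b) := by nlinarith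
    _ ≤ 2^b * 2^(n+1-b) := by
        have : q2 + 1 ≤ 2^b := hq2
        exact Nat.mul_le_mul_right _ this
    _ = 2^(n+1) := by rw [← pow_add]; congr 1; omega
  have hdivX : ∀ u < 2^(n+1-a), (q1 * 2^(n+1-a) + u) / 2^(n+1-a) = q1 := by
    intro u hu
    rw [mul_comm, Nat.mul_add_div (by positivity), Nat.div_eq_of_lt hu, add_zero]
  have hdivY : ∀ v < 2^(n+1-b), (q2 * 2^(n+1-b) + v) / 2^(n+1-b) = q2 := by
    intro v hv
    rw [mul_comm, Nat.mul_add_div (by positivity), Nat.div_eq_of_lt hv, add_zero]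
  have hset : {p : ℝ × ℝ | p ∈ (dyadicI a q1) ×ˢ (dyadicI b q2) ∧
        signedSum n ε p = (n : ℝ) + 1 - 2 * k}
      = ⋃ uv ∈ T, (dyadicI (n+1) (q1 * 2^(n+1-a) + uv.1)
          ×ˢ dyadicI (n+1) (q2 * 2^(n+1-b) + uv.2)) := by
    ext ⟨x, y⟩
    simp only [Set.mem_setOf_eq, Set.mem_prod, Set.mem_iUnion, Finset.mem_coe, hT,
      Finset.mem_filter, Finset.mem_product, Finset.mem_range, exists_prop]
    constructor
    · rintro ⟨⟨hx, hy⟩, hsum⟩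
      obtain ⟨u, hu, hxu⟩ := dyadicI_decomp ha hx
      obtain ⟨v, hv, hyv⟩ := dyadicI_decomp hb hy
      refine ⟨(u, v), ⟨⟨hu, hv⟩, ?_⟩, hxu, hyv⟩
      rw [← signedSum_eq n ε _ _ (hXlt u hu) (hYlt v hv) x y hxu hyv]
      exact hsum
    · rintro ⟨⟨u, v⟩, ⟨⟨hu, hv⟩, hG⟩, hxu, hyv⟩
      refine ⟨⟨?_, ?_⟩, ?_⟩
      · have := dyadicI_subset (by omega : a ≤ n+1) _ hxu
        rwa [show n+1-a = (n+1)-a from rfl, hdivX u hu] at this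
      · have := dyadicI_subset (by omega : b ≤ n+1) _ hyv
        rwa [show n+1-b = (n+1)-b from rfl, hdivY v hv] at this
      · rw [signedSum_eq n ε _ _ (hXlt u hu) (hYlt v hv) x y hxu hyv]
        exact hG
  rw [hset]
  have hdisj : (T : Set (ℕ × ℕ)).PairwiseDisjoint
      (fun uv : ℕ × ℕ => (dyadicI (n+1) (q1 * 2^(n+1-a) + uv.1)
          ×ˢ dyadicI (n+1) (q2 * 2^(n+1-b) + uv.2) : Set (ℝ × ℝ))) := by
    intro uv huv uv' huv' hne
    simp only [Finset.coe_filter, Set.mem_setOf_eq, Finset.mem_product, Finset.mem_range,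
      hT] at huv huv'
    have hne2 : q1 * 2^(n+1-a) + uv.1 ≠ q1 * 2^(n+1-a) + uv'.1 ∨
        q2 * 2^(n+1-b) + uv.2 ≠ q2 * 2^(n+1-b) + uv'.2 := by
      by_contra hcon
      push_neg at hcon
      exact hne (Prod.ext (by omega) (by omega))
    rw [Function.onFun, Set.disjoint_left]
    rintro ⟨x, y⟩ hp hp'
    rcases hne2 with h | h
    · exact h (dyadicI_unique hp.1 hp'.1)
    · exact h (dyadicI_unique hp.2 hp'.2)
  rw [measure_biUnion_finset hdisj (fun uv _ =>
    (dyadicI_measurable _ _).prod (dyadicI_measurable _ _))]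
  have hvol : ∀ uv ∈ T, volume ((dyadicI (n+1) (q1 * 2^(n+1-a) + uv.1)
      ×ˢ dyadicI (n+1) (q2 * 2^(n+1-b) + uv.2) : Set (ℝ × ℝ)))
      = ENNReal.ofReal ((2:ℝ)^(-((n+1:ℕ)):ℤ)) * ENNReal.ofReal ((2:ℝ)^(-((n+1:ℕ)):ℤ)) :=
    fun uv _ => square_volume (n+1) _ _
  rw [Finset.sum_congr rfl hvol, Finset.sum_const]
  have hcard : T.card = 2^((n+1-a)+(n+1-b)-(n+1)) * cnt (n+1) ((n:ℝ) + 1 - 2*k) := by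
    rw [hT]
    exact count_lemma (n+1) (n+1-a) (n+1-b) q1 q2 ε hε ((n:ℝ)+1-2*k) (by omega)
  have hcnt : cnt (n+1) ((n:ℝ) + 1 - 2*k) = (n+1).choose k := by
    rw [show (n:ℝ)+1-2*k = ((n+1:ℕ):ℝ) - 2*k from by push_cast; ring]
    exact cnt_eval (n+1) k hk
  rw [hcard, hcnt, ← ENNReal.ofReal_mul (by positivity), nsmul_eq_mul,
    ← ENNReal.ofReal_natCast (2^((n+1-a)+(n+1-b)-(n+1)) * (n+1).choose k),
    ← ENNReal.ofReal_mul (by positivity)]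
  congr 1
  have h2 : (2:ℝ) ≠ 0 := two_ne_zero
  have hM : ((2:ℝ)^((n+1-a)+(n+1-b)-(n+1):ℕ)) = (2:ℝ)^((n:ℤ)+1-(a:ℤ)-(b:ℤ)) := by
    rw [← zpow_natCast (2:ℝ)]
    congr 1
    omega
  have e : (2:ℝ)^((n:ℤ)+1-(a:ℤ)-(b:ℤ)) * ((2:ℝ)^(-((n:ℤ)+1)) * (2:ℝ)^(-((n:ℤ)+1)))
      = (2:ℝ)^(-(a:ℤ)-(b:ℤ)) / (2:ℝ)^(n+1) := by
    rw [show ((2:ℝ)^(n+1) : ℝ) = (2:ℝ)^(((n+1:ℕ)):ℤ) from (zpow_natCast 2 (n+1)).symm,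
      ← zpow_add₀ h2, ← zpow_add₀ h2, ← zpow_sub₀ h2]
    congr 1
    push_cast
    ring
  push_cast
  rw [hM]
  linear_combination (((n+1).choose k : ℕ) : ℝ) * e
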